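/- For α ∈ (-3, 1] and z in the unit disk, the function q̃_α(z) = 3/(3 + (α-3)z - αz²) satisfies Re q̃_α(z) > 9(1+α)/(2(3+α)²). -/

import Mathlib

lemma aux_sq (z : ℂ) (hz : ‖z‖ < 1) : z.re ^ 2 + z.im ^ 2 < 1 := by
  have h1 : ‖z‖ < 1 := hz
  have h2 : ‖z‖ ^ 2 = Complex.normSq z := Complex.sq_norm z
  have h3 : Complex.normSq z = z.re * z.re + z.im * z.im := Complex.normSq_apply z
  nlinarith [norm_nonneg z]

lemma aux1 (z : ℂ) (hz : ‖z‖ < 1) : (1 / (1 - z)).re > 1 / 2 := by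
  have h := aux_sq z hz
  have hz1 : (1 : ℂ) - z ≠ 0 := by
    intro h0
    have : z = 1 := by linear_combination -h0
    rw [this] at hz; norm_num at hz
  have hne : Complex.normSq (1 - z) > 0 := Complex.normSq_pos.mpr hz1
  have hre : (1 / (1 - z)).re = (1 - z.re) / Complex.normSq (1 - z) := by
    rw [Complex.div_re]
    simp [Complex.normSq_apply]
  rw [hre, gt_iff_lt, div_lt_div_iff₀ (by norm_num) hne]
  have hns : Complex.normSq (1 - z) = (1 - z.re) ^ 2 + z.im ^ 2 := by
    simp [Complex.normSq_apply]; ring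
  rw [hns]; nlinarith

lemma aux2 (α : ℝ) (hα1 : -3 < α) (hα2 : α ≤ 1) (z : ℂ) (hz : ‖z‖ < 1)
    (hns : Complex.normSq (3 + (α : ℂ) * z) > 0) :
    α * ((1 / (3 + (α : ℂ) * z)).re - 1 / (3 + α)) ≥ 0 := by
  have h := aux_sq z hz
  have h3α : (0:ℝ) < 3 + α := by linarith
  have hx1 : z.re < 1 := by nlinarith [sq_nonneg z.im, sq_nonneg (z.re - 1)]
  have hx2 : -1 < z.re := by nlinarith [sq_nonneg z.im, sq_nonneg (z.re + 1)]
  have hre : (1 / (3 + (α : ℂ) * z)).re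
      = (3 + α * z.re) / Complex.normSq (3 + (α : ℂ) * z) := by
    rw [Complex.div_re]
    simp [Complex.normSq_apply, Complex.add_re, Complex.mul_re]
  rw [hre]
  have hns' : Complex.normSq (3 + (α : ℂ) * z)
      = (3 + α * z.re) ^ 2 + (α * z.im) ^ 2 := by
    simp [Complex.normSq_apply, Complex.add_re, Complex.add_im, Complex.mul_re,
      Complex.mul_im]
    ring
  have hNne : ((3 + α * z.re) ^ 2 + (α * z.im) ^ 2) ≠ 0 := by
    rw [← hns']; exact hns.ne'
  -- key: (3 + αx)(1-x) - α y² ≥ 0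
  have key : (3 + α * z.re) * (1 - z.re) - α * z.im ^ 2 ≥ 0 := by
    rcases le_or_gt 0 α with hpos | hneg
    · nlinarith [mul_nonneg hpos (by nlinarith : (0:ℝ) ≤ 1 - z.re ^ 2 - z.im ^ 2),
        mul_nonneg (by linarith : (0:ℝ) ≤ 1 - z.re) (by linarith : (0:ℝ) ≤ 3 - α)]
    · have h1 : 3 + α * z.re > 0 := by nlinarith
      nlinarith [mul_nonneg (neg_nonneg.mpr hneg.le) (sq_nonneg z.im)]
  rw [hns']
  have expand : α * ((3 + α * z.re) / ((3 + α * z.re) ^ 2 + (α * z.im) ^ 2) - 1 / (3 + α))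
      = α ^ 2 * ((3 + α * z.re) * (1 - z.re) - α * z.im ^ 2)
        / (((3 + α * z.re) ^ 2 + (α * z.im) ^ 2) * (3 + α)) := by
    rw [div_sub_div _ _ hNne h3α.ne', ← mul_div_assoc,
      div_eq_div_iff (mul_ne_zero hNne h3α.ne') (mul_ne_zero hNne h3α.ne')]
    ring
  rw [expand]
  have hNpos : (0:ℝ) < (3 + α * z.re) ^ 2 + (α * z.im) ^ 2 := by
    rw [← hns']; exact hns
  positivity

/-- For α ∈ (-3,1] and z in the unit disk, Re q̃_α(z) > 9(1+α)/(2(3+α)²). -/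
theorem stmt0 (α : ℝ) (hα1 : -3 < α) (hα2 : α ≤ 1) (z : ℂ) (hz : ‖z‖ < 1) :
    (3 / (3 + ((α : ℂ) - 3) * z - (α : ℂ) * z ^ 2)).re > 9 * (1 + α) / (2 * (3 + α) ^ 2) := by
  have h3α : (0:ℝ) < 3 + α := by linarith
  have h3αC : (3 : ℂ) + (α : ℝ) ≠ 0 := by
    intro h
    have : (3 + α : ℝ) = 0 := by exact_mod_cast congrArg Complex.re h
    linarith
  have hz1 : (1 : ℂ) - z ≠ 0 := by
    intro h0
    have : z = 1 := by linear_combination -h0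
    rw [this] at hz; norm_num at hz
  have hz2 : (3 : ℂ) + (α : ℂ) * z ≠ 0 := by
    intro h0
    have h1 : ‖(α : ℂ) * z‖ < 3 := by
      rw [norm_mul, Complex.norm_real]
      have h2 : |α| < 3 := abs_lt.mpr ⟨hα1, by linarith⟩
      calc |α| * ‖z‖ ≤ |α| * 1 := by
            exact mul_le_mul_of_nonneg_left hz.le (abs_nonneg α)
        _ < 3 := by linarith
    have h3 : (α : ℂ) * z = -3 := by linear_combination h0
    rw [h3] at h1
    norm_num at h1
  -- partial fraction decomposition
  have hD : (3 : ℂ) + ((α : ℂ) - 3) * z - (α : ℂ) * z ^ 2 = (1 - z) * (3 + (α : ℂ) * z) := by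
    ring
  have hdec : (3 : ℂ) / (3 + ((α : ℂ) - 3) * z - (α : ℂ) * z ^ 2)
      = ((3 / (3 + α) : ℝ) : ℂ) * (1 / (1 - z))
        + ((3 * α / (3 + α) : ℝ) : ℂ) * (1 / (3 + (α : ℂ) * z)) := by
    rw [hD]
    have : ((3 + α : ℝ) : ℂ) ≠ 0 := by
      exact_mod_cast (by push_cast; exact h3αC : ((3 + α : ℝ) : ℂ) ≠ 0)
    push_cast
    rw [div_eq_iff (mul_ne_zero hz1 hz2)]
    field_simp
    ring
  have hre : (3 / (3 + ((α : ℂ) - 3) * z - (α : ℂ) * z ^ 2)).re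
      = (3 / (3 + α)) * (1 / (1 - z)).re + (3 * α / (3 + α)) * (1 / (3 + (α : ℂ) * z)).re := by
    rw [hdec]
    simp only [Complex.add_re, Complex.re_ofReal_mul]
  rw [hre]
  have h1 := aux1 z hz
  have hns : Complex.normSq (3 + (α : ℂ) * z) > 0 := Complex.normSq_pos.mpr hz2
  have h2 := aux2 α hα1 hα2 z hz hns
  have hkey : 9 * (1 + α) / (2 * (3 + α) ^ 2)
      = (3 / (3 + α)) * (1 / 2) + (3 * α / (3 + α)) * (1 / (3 + α)) := by
    field_simp
    ring
  rw [hkey]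
  have hc1 : (0:ℝ) < 3 / (3 + α) := by positivity
  set r1 := (1 / (1 - z)).re
  set r2 := (1 / (3 + (α : ℂ) * z)).re
  have heq : 3 / (3 + α) * (α * (r2 - 1 / (3 + α)))
      = 3 * α / (3 + α) * r2 - 3 * α / (3 + α) * (1 / (3 + α)) := by
    field_simp
  have hc2 : 3 * α / (3 + α) * r2 - 3 * α / (3 + α) * (1 / (3 + α)) ≥ 0 := by
    rw [← heq]; exact mul_nonneg hc1.le h2
  nlinarith [mul_lt_mul_of_pos_left h1 hc1]
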